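/- Let p be a prime with p ≡ 3 (mod 4). Then Σ_{k=0}^{p-1} C(2k,k)² · L_k · 16^(p-1-k) ≡ 0 (mod p²), where L_k is the k-th Lucas number (L_0 = 2, L_1 = 1, L_{k+2} = L_{k+1} + L_k). Equivalently, Σ_{k=0}^{p-1} C(2k,k)² L_k / 16^k ≡ 0 (mod p²). -/

import Mathlib

open Finset

theorem sum_choose_sq_mul (m d : ℕ) (hd : d ≤ m) :
    ∑ k ∈ range (m+1), m.choose k * m.choose k * k.choose d
      = m.choose d * (2*m - d).choose (m - d) := by
  have h1 : ∑ k ∈ range (m+1), m.choose k * m.choose k * k.choose d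
      = ∑ k ∈ Ico d (m+1), m.choose k * m.choose k * k.choose d := by
    refine (Finset.sum_subset ?_ ?_).symm
    · intro k hk
      simp only [mem_Ico, mem_range] at *
      omega
    · intro k hk hk'
      simp only [mem_Ico, mem_range] at *
      have : k < d := by omega
      rw [Nat.choose_eq_zero_of_lt this, Nat.mul_zero]
  rw [h1, Finset.sum_Ico_eq_sum_range]
  have h2 : ∀ t ∈ range (m + 1 - d), m.choose (d+t) * m.choose (d+t) * (d+t).choose d
      = m.choose d * (m.choose (d+t) * (m-d).choose t) := by
    intro t ht
    simp only [mem_range] at ht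
    have h3 : m.choose (d+t) * (d+t).choose d = m.choose d * (m-d).choose (d+t-d) :=
      Nat.choose_mul (by omega)
    have h4 : d + t - d = t := by omega
    rw [h4] at h3
    calc m.choose (d+t) * m.choose (d+t) * (d+t).choose d
        = m.choose (d+t) * (m.choose (d+t) * (d+t).choose d) := by ring
      _ = m.choose (d+t) * (m.choose d * (m-d).choose t) := by rw [h3]
      _ = m.choose d * (m.choose (d+t) * (m-d).choose t) := by ring
  rw [Finset.sum_congr rfl h2, ← Finset.mul_sum]
  congr 1
  -- Vandermonde: ∑ t ∈ range (m+1-d), m.choose (d+t) * (m-d).choose t = (2m-d).choose (m-d)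
  have hv := Nat.add_choose_eq m (m - d) (m - d)
  rw [Finset.Nat.sum_antidiagonal_eq_sum_range_succ_mk] at hv
  have : 2*m - d = m + (m - d) := by omega
  rw [this, hv]
  have hr : m + 1 - d = m - d + 1 := by omega
  rw [hr]
  rw [← Finset.sum_range_reflect]
  refine Finset.sum_congr rfl ?_
  intro t ht
  simp only [mem_range] at ht
  have e1 : d + (m - d + 1 - 1 - t) = m - t := by omega
  have e2 : m - d + 1 - 1 - t = m - d - t := by omega
  rw [e1, e2, Nat.choose_symm (by omega : t ≤ m)]

open Nat in
theorem fact_mul_central (k : ℕ) :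
    (k)! * (2*k).choose k = 2^k * ∏ i ∈ range k, (2*i+1) := by
  induction k with
  | zero => simp
  | succ n ih =>
    have hc : (2*(n+1)).choose (n+1) = Nat.centralBinom (n+1) := rfl
    have hc' : (2*n).choose n = Nat.centralBinom n := rfl
    have h := Nat.succ_mul_centralBinom_succ n
    calc ((n+1))! * (2*(n+1)).choose (n+1)
        = (n)! * ((n+1) * Nat.centralBinom (n+1)) := by
          rw [Nat.factorial_succ, hc]; ring
      _ = (n)! * (2 * (2*n+1) * Nat.centralBinom n) := by rw [h]
      _ = (2*n+1) * 2 * ((n)! * (2*n).choose n) := by rw [hc']; ring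
      _ = (2*n+1) * 2 * (2^n * ∏ i ∈ range n, (2*i+1)) := by rw [ih]
      _ = 2^(n+1) * ∏ i ∈ range (n+1), (2*i+1) := by
          rw [prod_range_succ]; ring

theorem legendre_form (m : ℕ) (x : ℝ) :
    ∑ k ∈ range (m+1), (m.choose k * (m+k).choose k : ℝ) * (-x)^k
      = ∑ k ∈ range (m+1), ((m.choose k : ℝ))^2 * (-x)^(m-k) * (1-x)^k := by
  have hbin : ∀ k, (1 - x)^k = ∑ d ∈ range (k+1), (k.choose d : ℝ) * (-x)^(k-d) := by
    intro k
    have := add_pow (-x) 1 k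
    simp only [one_pow, mul_one] at this
    have h0 : (1 : ℝ) - x = -x + 1 := by ring
    rw [h0, this, ← Finset.sum_range_reflect]
    refine Finset.sum_congr rfl fun d hd => ?_
    simp only [mem_range] at hd
    have e1 : k + 1 - 1 - d = k - d := by omega
    rw [e1, Nat.choose_symm (by omega : d ≤ k)]
    ring
  calc ∑ k ∈ range (m+1), (m.choose k * (m+k).choose k : ℝ) * (-x)^k
      = ∑ d ∈ range (m+1),
          (m.choose d * (2*m - d).choose (m - d) : ℝ) * (-x)^(m-d) := by
        rw [← Finset.sum_range_reflect]
        refine Finset.sum_congr rfl fun k hk => ?_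
        simp only [mem_range] at hk
        have e1 : m + 1 - 1 - k = m - k := by omega
        have e3 : m + (m - k) = 2*m - k := by omega
        rw [e1, e3, Nat.choose_symm (by omega : k ≤ m)]
    _ = ∑ d ∈ range (m+1), ∑ k ∈ range (m+1),
          ((m.choose k : ℝ) * m.choose k * k.choose d) * (-x)^(m-d) := by
        refine Finset.sum_congr rfl fun d hd => ?_
        simp only [mem_range] at hd
        rw [← Finset.sum_mul]
        congr 1
        have := sum_choose_sq_mul m d (by omega)
        exact_mod_cast (congrArg (fun n : ℕ => (n : ℝ)) this).symm
    _ = ∑ k ∈ range (m+1), ∑ d ∈ range (m+1),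
          ((m.choose k : ℝ) * m.choose k * k.choose d) * (-x)^(m-d) :=
        Finset.sum_comm
    _ = ∑ k ∈ range (m+1), ((m.choose k : ℝ))^2 * (-x)^(m-k) * (1-x)^k := by
        refine Finset.sum_congr rfl fun k hk => ?_
        simp only [mem_range] at hk
        rw [hbin k]
        rw [Finset.mul_sum]
        rw [← Finset.sum_subset (Finset.range_subset_range.2 (by omega : k+1 ≤ m+1))
          (fun d hd hd' => ?_)]
        · refine Finset.sum_congr rfl fun d hd => ?_
          simp only [mem_range] at hd
          have e4 : m - k + (k - d) = m - d := by omega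
          rw [show ((m.choose k : ℝ))^2 * (-x)^(m-k) * ((k.choose d : ℝ) * (-x)^(k-d))
              = ((m.choose k : ℝ) * m.choose k * k.choose d) * ((-x)^(m-k) * (-x)^(k-d)) by ring,
            ← pow_add, e4]
        · simp only [mem_range] at hd hd'
          rw [Nat.choose_eq_zero_of_lt (by omega : k < d)]
          push_cast
          ring

open goldenRatio in
theorem lucas_vanish (m : ℕ) (hm : Odd m) (L : ℕ → ℤ) (hL0 : L 0 = 2) (hL1 : L 1 = 1)
    (hLrec : ∀ k : ℕ, L (k + 2) = L (k + 1) + L k) :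
    ∑ k ∈ range (m+1), (-1 : ℤ)^k * ((m.choose k : ℤ) * ((m+k).choose k : ℤ)) * L k = 0 := by
  have hbinet : ∀ k, (L k : ℝ) = φ^k + ψ^k := by
    have key : ∀ k, (L k : ℝ) = φ^k + ψ^k ∧ (L (k+1) : ℝ) = φ^(k+1) + ψ^(k+1) := by
      intro k
      induction k with
      | zero =>
        refine ⟨by rw [hL0]; push_cast; norm_num, ?_⟩
        rw [hL1]; push_cast; rw [pow_one, pow_one, Real.goldenRatio_add_goldenConj]
      | succ n ih =>
        refine ⟨ih.2, ?_⟩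
        rw [hLrec n]
        push_cast
        rw [ih.1, ih.2]
        have h1 : φ^(n+2) = φ^n * φ^2 := by ring
        have h2 : ψ^(n+2) = ψ^n * ψ^2 := by ring
        rw [h1, h2, Real.goldenRatio_sq, Real.goldenConj_sq]
        ring
    exact fun k => (key k).1
  have main : (↑(∑ k ∈ range (m+1),
      (-1 : ℤ)^k * ((m.choose k : ℤ) * ((m+k).choose k : ℤ)) * L k) : ℝ) = 0 := by
    push_cast
    have hsplit : ∑ k ∈ range (m+1),
        (-1 : ℝ)^k * ((m.choose k : ℝ) * ((m+k).choose k : ℝ)) * (L k : ℝ)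
        = (∑ k ∈ range (m+1), (m.choose k * (m+k).choose k : ℝ) * (-φ)^k)
          + ∑ k ∈ range (m+1), (m.choose k * (m+k).choose k : ℝ) * (-ψ)^k := by
      rw [← Finset.sum_add_distrib]
      refine Finset.sum_congr rfl fun k _ => ?_
      rw [hbinet k]
      rw [neg_pow φ, neg_pow ψ]
      ring
    rw [hsplit, legendre_form m φ, legendre_form m ψ]
    rw [Real.one_sub_goldenConj, Real.one_sub_goldenRatio]
    rw [← Finset.sum_range_reflect (fun k => ((m.choose k : ℝ))^2 * (-ψ)^(m-k) * φ^k) (m+1)]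
    rw [← Finset.sum_add_distrib]
    refine Finset.sum_eq_zero fun k hk => ?_
    simp only [mem_range] at hk
    have e1 : m + 1 - 1 - k = m - k := by omega
    have e2 : m - (m - k) = k := by omega
    rw [e1, e2, Nat.choose_symm (by omega : k ≤ m)]
    have hsgn : (-1 : ℝ)^(m-k) * (-1)^k = -1 := by
      rw [← pow_add, show m - k + k = m by omega]
      exact hm.neg_one_pow
    have h3 : (-φ)^(m-k) = (-1)^(m-k) * φ^(m-k) := by rw [neg_pow]
    have h4 : (-ψ)^k = (-1)^k * ψ^k := by rw [neg_pow]
    rw [h3, h4]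
    have hsgn2 : (-1 : ℝ)^(m-k) = -(-1)^k := by
      have hk2 : ((-1 : ℝ)^k)*((-1 : ℝ)^k) = 1 := by
        rw [← pow_add]
        exact Even.neg_one_pow ⟨k, rfl⟩
      calc (-1 : ℝ)^(m-k) = (-1 : ℝ)^(m-k) * (((-1 : ℝ)^k)*((-1 : ℝ)^k)) := by rw [hk2]; ring
        _ = ((-1 : ℝ)^(m-k) * (-1)^k) * (-1)^k := by ring
        _ = -(-1)^k := by rw [hsgn]; ring
    rw [hsgn2]
    ring
  exact_mod_cast main

theorem key_cong (p m k : ℕ) (hp : p.Prime) (hm : 2*m+1 = p) (hk : k ≤ m) :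
    (((2*k).choose k : ZMod (p^2)))^2
      = (-16)^k * (m.choose k : ZMod (p^2)) * ((m+k).choose k : ZMod (p^2)) := by
  haveI : NeZero (p^2) := ⟨pow_ne_zero 2 hp.pos.ne'⟩
  set R := ZMod (p^2) with hR
  have hkp : k < p := by omega
  have hndvd : ¬ p ∣ Nat.factorial k := by
    rw [hp.dvd_factorial]; omega
  have hunit : IsUnit ((Nat.factorial k : ℕ) : R) := by
    rw [ZMod.isUnit_iff_coprime]
    exact (Nat.Coprime.pow_right 2 ((Nat.coprime_comm).1 (hp.coprime_iff_not_dvd.2 hndvd)))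
  have hp2R : ((p : R))^2 = 0 := by
    rw [← Nat.cast_pow]; exact ZMod.natCast_self _
  have hpm : ((2*(m:R)+1))^2 = 0 := by
    have : ((2*m+1 : ℕ) : R) = (p : R) := by rw [hm]
    push_cast +zetaDelta at this
    rw [this, hp2R]
  refine (hunit.pow 2).mul_left_cancel ?_
  have lhs_eq : ((Nat.factorial k : ℕ) : R)^2 * (((2*k).choose k : R))^2
      = ∏ i ∈ range k, (4 * (2*(i:R)+1)^2) := by
    rw [← mul_pow, ← Nat.cast_mul, fact_mul_central k]
    push_cast
    rw [mul_pow, ← Finset.prod_pow]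
    rw [show ((2:R)^k)^2 = ∏ _i ∈ range k, (4:R) by
      rw [Finset.prod_const, Finset.card_range, ← pow_mul, pow_mul']; norm_num]
    rw [← Finset.prod_mul_distrib]
  have hdesc1 : Nat.factorial k * m.choose k = ∏ i ∈ range k, (m - i) := by
    rw [← Nat.descFactorial_eq_factorial_mul_choose, Nat.descFactorial_eq_prod_range]
  have hdesc2 : Nat.factorial k * (m+k).choose k = ∏ i ∈ range k, (m + 1 + i) := by
    rw [← Nat.descFactorial_eq_factorial_mul_choose, Nat.descFactorial_eq_prod_range]
    rw [← Finset.prod_range_reflect]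
    refine Finset.prod_congr rfl fun i hi => ?_
    simp only [mem_range] at hi
    omega
  have rhs_eq : ((Nat.factorial k : ℕ) : R)^2 *
      ((-16)^k * (m.choose k : R) * ((m+k).choose k : R))
      = ∏ i ∈ range k, ((-16) * ((m:R) - i) * ((m:R) + 1 + i)) := by
    have c1 : ((Nat.factorial k : ℕ) : R) * (m.choose k : R)
        = ∏ i ∈ range k, ((m:R) - i) := by
      rw [← Nat.cast_mul, hdesc1]
      push_cast [Nat.cast_prod]
      refine Finset.prod_congr rfl fun i hi => ?_
      simp only [mem_range] at hi
      exact Nat.cast_sub (R := R) (by omega : i ≤ m)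
    have c2 : ((Nat.factorial k : ℕ) : R) * ((m+k).choose k : R)
        = ∏ i ∈ range k, ((m:R) + 1 + i) := by
      rw [← Nat.cast_mul, hdesc2, Nat.cast_prod]
      exact Finset.prod_congr rfl fun i _ => by push_cast; ring
    calc ((Nat.factorial k : ℕ) : R)^2 * ((-16)^k * (m.choose k : R) * ((m+k).choose k : R))
        = (-16)^k * ((((Nat.factorial k : ℕ) : R)) * (m.choose k : R))
            * ((((Nat.factorial k : ℕ) : R)) * ((m+k).choose k : R)) := by ring
      _ = (∏ _i ∈ range k, (-16 : R)) * (∏ i ∈ range k, ((m:R) - i))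
            * (∏ i ∈ range k, ((m:R) + 1 + i)) := by rw [c1, c2, Finset.prod_const, Finset.card_range]
      _ = ∏ i ∈ range k, ((-16) * ((m:R) - i) * ((m:R) + 1 + i)) := by
          rw [← Finset.prod_mul_distrib, ← Finset.prod_mul_distrib]
  rw [lhs_eq, rhs_eq]
  refine Finset.prod_congr rfl fun i _ => ?_
  linear_combination (4:R) * hpm

theorem rv_lucas (p : ℕ) (hp : p.Prime) (hp4 : p % 4 = 3)
    (L : ℕ → ℤ) (hL0 : L 0 = 2) (hL1 : L 1 = 1)
    (hLrec : ∀ k : ℕ, L (k + 2) = L (k + 1) + L k) :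
    (∑ k ∈ range p,
        ((Nat.choose (2 * k) k : ℤ)) ^ 2 * L k * 16 ^ (p - 1 - k)) ≡ 0
      [ZMOD (p : ℤ) ^ 2] := by
  have hp5 : 3 ≤ p := by
    rcases hp.two_le.lt_or_eq with h | h
    · omega
    · omega
  set m : ℕ := (p-1)/2 with hmdef
  have hm : 2*m+1 = p := by omega
  have hmodd : Odd m := ⟨(p-3)/4, by omega⟩
  -- reduce to ZMod (p^2)
  rw [show ((p:ℤ)^2) = ((p^2 : ℕ) : ℤ) by push_cast; ring]
  refine Int.modEq_zero_iff_dvd.mpr ?_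
  rw [← ZMod.intCast_zmod_eq_zero_iff_dvd]
  set R := ZMod (p^2) with hR
  have hp2R : ((p : R))^2 = 0 := by
    rw [← Nat.cast_pow]; exact ZMod.natCast_self _
  push_cast
  -- split the sum
  rw [Finset.range_eq_Ico, ← Finset.sum_Ico_consecutive _ (by omega : 0 ≤ m+1) (by omega : m+1 ≤ p)]
  have h2 : ∑ k ∈ Ico (m+1) p, ((Nat.choose (2*k) k : R))^2 * (L k : R) * 16^(p-1-k) = 0 := by
    refine Finset.sum_eq_zero fun k hk => ?_
    simp only [mem_Ico] at hk
    have hdvd : p ∣ (2*k).choose k := by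
      have h1 : p ∣ Nat.factorial (2*k) := Nat.dvd_factorial hp.pos (by omega)
      rw [← Nat.choose_mul_factorial_mul_factorial (by omega : k ≤ 2*k)] at h1
      have hnk : ¬ p ∣ Nat.factorial k := by rw [hp.dvd_factorial]; omega
      have h3 : 2*k - k = k := by omega
      rw [h3] at h1
      rcases (Nat.Prime.dvd_mul hp).1 h1 with h4 | h4
      · rcases (Nat.Prime.dvd_mul hp).1 h4 with h5 | h5
        · exact h5
        · exact absurd h5 hnk
      · exact absurd h4 hnk
    obtain ⟨c, hc⟩ := hdvd
    rw [show (2*k) = 2*k by rfl, hc]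
    push_cast +zetaDelta
    rw [show ((p:R) * (c:R))^2 = (p:R)^2 * (c:R)^2 by ring, hp2R]
    ring
  rw [h2, add_zero]
  -- main part
  have h1 : ∑ k ∈ Ico 0 (m+1), ((Nat.choose (2*k) k : R))^2 * (L k : R) * 16^(p-1-k)
      = 16^(p-1) * ∑ k ∈ range (m+1),
          (-1:R)^k * ((m.choose k : R) * ((m+k).choose k : R)) * (L k : R) := by
    rw [Finset.mul_sum, ← Finset.range_eq_Ico]
    refine Finset.sum_congr rfl fun k hk => ?_
    simp only [mem_range] at hk
    rw [key_cong p m k hp hm (by omega)]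
    have h16 : ((-16 : R))^k * 16^(p-1-k) = (-1)^k * 16^(p-1) := by
      rw [show ((-16):R) = -1 * 16 by norm_num, mul_pow, mul_assoc, ← pow_add,
        show k + (p-1-k) = p-1 by omega]
    calc (-16:R)^k * (m.choose k : R) * ((m+k).choose k : R) * (L k : R) * 16^(p-1-k)
        = ((-16 : R)^k * 16^(p-1-k)) * ((m.choose k : R) * ((m+k).choose k : R)) * (L k : R) := by
          ring
      _ = ((-1)^k * 16^(p-1)) * ((m.choose k : R) * ((m+k).choose k : R)) * (L k : R) := by
          rw [h16]
      _ = 16^(p-1) * ((-1:R)^k * ((m.choose k : R) * ((m+k).choose k : R)) * (L k : R)) := by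
          ring
  rw [h1]
  have hz := lucas_vanish m hmodd L hL0 hL1 hLrec
  have hzc : ((∑ k ∈ range (m+1),
      (-1 : ℤ)^k * ((m.choose k : ℤ) * ((m+k).choose k : ℤ)) * L k : ℤ) : R) = 0 := by
    rw [hz]; exact Int.cast_zero
  push_cast +zetaDelta at hzc
  rw [hzc, mul_zero]
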